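/- Let n ≥ 3, let φ : M → ℝⁿ be a topological embedding of a topological space M with φ(M) open in ℝⁿ, and let p ∈ frontier(φ(M)) be an isolated boundary point (there is an open U ⊆ ℝⁿ with U ∩ frontier(φ(M)) = {p}). Then {p} satisfies the simply connected neighbourhood property: every open set containing p contains an open set V ∋ p such that the subspace V ∩ φ(M) is simply connected. -/

import Mathlib

open Set Topology Metric

noncomputable section
open unitInterval
variable {E : Type*} [NormedAddCommGroup E] [NormedSpace ℝ E]

def segPath {s : Set E} (x y : ↥s)
    (h : ∀ t : I, (1 - (t : ℝ)) • (x : E) + (t : ℝ) • (y : E) ∈ s) : Path x y where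
  toFun t := ⟨(1 - (t : ℝ)) • (x : E) + (t : ℝ) • (y : E), h t⟩
  continuous_toFun := by apply Continuous.subtype_mk; fun_prop
  source' := by ext; simp
  target' := by ext; simp

@[simp] lemma segPath_apply {s : Set E} (x y : ↥s)
    (h : ∀ t : I, (1 - (t : ℝ)) • (x : E) + (t : ℝ) • (y : E) ∈ s) (t : I) :
    (segPath x y h t : E) = (1 - (t : ℝ)) • (x : E) + (t : ℝ) • (y : E) := rfl

lemma homotopic_of_straight {s : Set E} {x y : ↥s} (γ₀ γ₁ : Path x y)
    (h : ∀ sg t : I, (1 - (sg : ℝ)) • (γ₀ t : E) + (sg : ℝ) • (γ₁ t : E) ∈ s) :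
    γ₀.Homotopic γ₁ := by
  refine ⟨⟨⟨⟨fun st => ⟨(1 - (st.1 : ℝ)) • (γ₀ st.2 : E) + (st.1 : ℝ) • (γ₁ st.2 : E),
      h st.1 st.2⟩, ?_⟩, ?_, ?_⟩, ?_⟩⟩
  · apply Continuous.subtype_mk
    have c0 : Continuous fun st : I × I => (γ₀ st.2 : E) :=
      continuous_subtype_val.comp (γ₀.continuous.comp continuous_snd)
    have c1 : Continuous fun st : I × I => (γ₁ st.2 : E) :=
      continuous_subtype_val.comp (γ₁.continuous.comp continuous_snd)
    fun_prop
  · intro t; ext; simp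
  · intro t; ext; simp
  · rintro sg t (rfl | rfl) <;> ext <;>
      simp [Path.source, Path.target, ← add_smul]

lemma homotopic_segment {p : E} {ε d : ℝ} {x y : ↥(ball p ε \ {p})} (γ : Path x y)
    (hd : ∀ t : I, d ≤ dist p (γ t : E))
    (hx : ∀ t : I, dist (x : E) (γ t : E) < d)
    (hy : ∀ t : I, dist (y : E) (γ t : E) < d) :
    ∃ hseg : ∀ t : I, (1 - (t : ℝ)) • (x : E) + (t : ℝ) • (y : E) ∈ ball p ε \ {p},
      γ.Homotopic (segPath x y hseg) := by
  have key : ∀ sg t : I, (1 - (sg : ℝ)) • (γ t : E) +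
      (sg : ℝ) • ((1 - (t : ℝ)) • (x : E) + (t : ℝ) • (y : E)) ∈ ball p ε \ {p} := by
    intro sg t
    set g : E := (γ t : E) with hg
    set m : E := (1 - (t : ℝ)) • (x : E) + (t : ℝ) • (y : E) with hmdef
    have hm : m ∈ ball p ε :=
      (convex_ball p ε) x.2.1 y.2.1 (by linarith [t.2.2]) t.2.1 (by ring)
    have hball : (1 - (sg : ℝ)) • g + (sg : ℝ) • m ∈ ball p ε :=
      (convex_ball p ε) (γ t).2.1 hm (by linarith [sg.2.2]) sg.2.1 (by ring)
    have hmg : m - g = (1 - (t : ℝ)) • ((x : E) - g) + (t : ℝ) • ((y : E) - g) := by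
      rw [hmdef]; module
    have hnorm : ‖m - g‖ < d := by
      have h1 : ‖m - g‖ ≤ (1 - (t : ℝ)) * ‖(x : E) - g‖ + (t : ℝ) * ‖(y : E) - g‖ := by
        rw [hmg]
        refine (norm_add_le _ _).trans ?_
        rw [norm_smul, norm_smul, Real.norm_eq_abs, Real.norm_eq_abs,
          abs_of_nonneg (by linarith [t.2.2] : (0:ℝ) ≤ 1 - (t:ℝ)), abs_of_nonneg t.2.1]
      have h2 : ‖(x : E) - g‖ < d := by rw [← dist_eq_norm]; exact hx t
      have h3 : ‖(y : E) - g‖ < d := by rw [← dist_eq_norm]; exact hy t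
      rcases eq_or_ne ((t : ℝ)) 0 with h0 | h0
      · rw [h0] at h1; simp at h1; linarith
      · have ht : 0 < (t : ℝ) := lt_of_le_of_ne t.2.1 (Ne.symm h0)
        have h5 : (t : ℝ) * ‖(y : E) - g‖ < (t : ℝ) * d :=
          mul_lt_mul_of_pos_left h3 ht
        have h4 : (1 - (t : ℝ)) * ‖(x : E) - g‖ ≤ (1 - (t : ℝ)) * d :=
          mul_le_mul_of_nonneg_left h2.le (by linarith [t.2.2])
        nlinarith
    have hne : (1 - (sg : ℝ)) • g + (sg : ℝ) • m ≠ p := by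
      intro heq
      have h1 : ‖(1 - (sg : ℝ)) • g + (sg : ℝ) • m - g‖ ≤ ‖m - g‖ := by
        have : (1 - (sg : ℝ)) • g + (sg : ℝ) • m - g = (sg : ℝ) • (m - g) := by module
        rw [this, norm_smul, Real.norm_eq_abs, abs_of_nonneg sg.2.1]
        nlinarith [sg.2.2, norm_nonneg (m - g)]
      have h2 : d ≤ dist p g := hd t
      rw [heq] at h1
      rw [dist_eq_norm] at h2
      linarith
    exact ⟨hball, by simpa using hne⟩
  refine ⟨fun t => by simpa using key 1 t, ?_⟩
  exact homotopic_of_straight γ (segPath x y _) fun sg t => by simpa using key sg t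

lemma mem_affineSpan_of_mem_segment {W : AffineSubspace ℝ E} {p c q : E}
    (hp : p ∈ W) (hc : c ∈ W) (hpc : p ≠ c) (h : p ∈ segment ℝ q c) : q ∈ W := by
  obtain ⟨a, b, ha, hb, hab, habq⟩ := h
  have ha' : a ≠ 0 := by
    rintro rfl
    have hb1 : b = 1 := by linarith
    apply hpc
    rw [← habq, hb1]
    simp
  have hq : q = a⁻¹ • (p - c) + c := by
    rw [← habq]
    have hb1 : b = 1 - a := by linarith
    subst hb1
    match_scalars <;> field_simp <;> ring
  have := W.smul_vsub_vadd_mem a⁻¹ hp hc hc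
  simpa [vsub_eq_sub, vadd_eq_add, ← hq] using this

lemma segment_subset_affineSpan {W : AffineSubspace ℝ E} {a b : E}
    (ha : a ∈ W) (hb : b ∈ W) : segment ℝ a b ⊆ (W : Set E) := by
  rintro z ⟨u, v, hu, hv, huv, rfl⟩
  have hz : u • a + v • b = u • (a -ᵥ b) +ᵥ b := by
    have hv1 : v = 1 - u := by linarith
    subst hv1
    simp [vsub_eq_sub, vadd_eq_add]
    module
  rw [hz]
  exact W.smul_vsub_vadd_mem u ha hb hb

lemma approx_polygonal {p : E} {ε : ℝ} :
    ∀ (k : ℕ) {x y : ↥(ball p ε \ {p})} (γ : Path x y) (d : ℝ),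
    (∀ t : I, d ≤ dist p (γ t : E)) →
    (∀ t t' : I, |(t : ℝ) - (t' : ℝ)| ≤ (2 : ℝ)⁻¹ ^ k → dist ((γ t) : E) ((γ t') : E) < d) →
    ∃ γ' : Path x y, γ.Homotopic γ' ∧ ∃ L : List (E × E), L ≠ [] ∧
      ∀ t : I, ∃ pr ∈ L, ((γ' t) : E) ∈ segment ℝ pr.1 pr.2 := by
  intro k
  induction k with
  | zero =>
    intro x y γ d hd hdiam
    have habs : ∀ t t' : I, |(t : ℝ) - (t' : ℝ)| ≤ (2 : ℝ)⁻¹ ^ 0 := by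
      intro t t'
      rw [pow_zero, abs_le]
      constructor
      · linarith [t.2.1, t'.2.2]
      · linarith [t.2.2, t'.2.1]
    have hx : ∀ t : I, dist (x : E) (γ t : E) < d := by
      intro t
      have := hdiam 0 t (habs 0 t)
      simpa [Path.source] using this
    have hy : ∀ t : I, dist (y : E) (γ t : E) < d := by
      intro t
      have := hdiam 1 t (habs 1 t)
      simpa [Path.target] using this
    obtain ⟨hseg, hhom⟩ := homotopic_segment γ hd hx hy
    refine ⟨segPath x y hseg, hhom, [((x : E), (y : E))], by simp, fun t => ?_⟩
    refine ⟨((x : E), (y : E)), by simp, ?_⟩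
    rw [segment_eq_image]
    exact ⟨(t : ℝ), ⟨t.2.1, t.2.2⟩, rfl⟩
  | succ k ih =>
    intro x y γ d hd hdiam
    have half_mem : (1 / 2 : ℝ) ∈ I := by norm_num
    set m : ↥(ball p ε \ {p}) := γ ⟨1/2, half_mem⟩ with hm
    have mem1 : ∀ t : I, ((t : ℝ) / 2) ∈ I := by
      intro t; constructor <;> [linarith [t.2.1]; linarith [t.2.2]]
    have mem2 : ∀ t : I, ((1 + (t : ℝ)) / 2) ∈ I := by
      intro t; constructor <;> [linarith [t.2.1]; linarith [t.2.2]]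
    set γ₁ : Path x m :=
      { toFun := fun t => γ ⟨(t : ℝ) / 2, mem1 t⟩
        continuous_toFun := by
          apply γ.continuous.comp
          apply Continuous.subtype_mk
          fun_prop
        source' := by simp [Path.source]
        target' := by norm_num [hm] } with hγ₁
    set γ₂ : Path m y :=
      { toFun := fun t => γ ⟨(1 + (t : ℝ)) / 2, mem2 t⟩
        continuous_toFun := by
          apply γ.continuous.comp
          apply Continuous.subtype_mk
          fun_prop
        source' := by norm_num [hm]
        target' := by norm_num [Path.target] } with hγ₂
    have htrans : γ₁.trans γ₂ = γ := by
      ext t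
      rw [Path.trans_apply]
      split_ifs with h
      · show ((γ _ : _) : E) = _
        congr 2
        ext
        show (2 * (t : ℝ)) / 2 = t
        ring
      · show ((γ _ : _) : E) = _
        congr 2
        ext
        show (1 + (2 * (t : ℝ) - 1)) / 2 = t
        ring
    obtain ⟨γ₁', h₁, L₁, hL₁ne, hL₁⟩ := ih γ₁ d (fun t => hd _) (by
      intro t t' hle
      apply hdiam
      show |(t : ℝ)/2 - (t' : ℝ)/2| ≤ _
      rw [show (t : ℝ)/2 - (t' : ℝ)/2 = ((t : ℝ) - (t' : ℝ))/2 by ring, abs_div]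
      rw [pow_succ]
      rw [abs_of_nonneg (by norm_num : (0:ℝ) ≤ 2)]
      nlinarith [abs_nonneg ((t : ℝ) - (t' : ℝ))])
    obtain ⟨γ₂', h₂, L₂, hL₂ne, hL₂⟩ := ih γ₂ d (fun t => hd _) (by
      intro t t' hle
      apply hdiam
      show |(1 + (t : ℝ))/2 - (1 + (t' : ℝ))/2| ≤ _
      rw [show (1 + (t : ℝ))/2 - (1 + (t' : ℝ))/2 = ((t : ℝ) - (t' : ℝ))/2 by ring, abs_div]
      rw [pow_succ]
      rw [abs_of_nonneg (by norm_num : (0:ℝ) ≤ 2)]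
      nlinarith [abs_nonneg ((t : ℝ) - (t' : ℝ))])
    refine ⟨γ₁'.trans γ₂', ?_, L₁ ++ L₂, by simp [hL₁ne], ?_⟩
    · rw [← htrans]
      exact Path.Homotopic.hcomp h₁ h₂
    · intro t
      rw [Path.trans_apply]
      split_ifs with h
      · obtain ⟨pr, hpr, hmem⟩ := hL₁ _
        exact ⟨pr, List.mem_append_left _ hpr, hmem⟩
      · obtain ⟨pr, hpr, hmem⟩ := hL₂ _
        exact ⟨pr, List.mem_append_right _ hpr, hmem⟩

lemma cone_homotopic {p : E} {ε : ℝ} {x y q : ↥(ball p ε \ {p})} (γ : Path x y)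
    (hq2 : ∀ t : I, p ∉ segment ℝ (q : E) ((γ t) : E))
    (h1 : ∀ t : I, (1 - (t : ℝ)) • (x : E) + (t : ℝ) • (q : E) ∈ ball p ε \ {p})
    (h2 : ∀ t : I, (1 - (t : ℝ)) • (y : E) + (t : ℝ) • (q : E) ∈ ball p ε \ {p}) :
    γ.Homotopic ((segPath x q h1).trans ((segPath y q h2).symm)) := by
  set τ : Path x q := segPath x q h1 with hτ
  set σ' : Path y q := segPath y q h2 with hσ'
  -- the auxiliary functions
  set u : I × I → ℝ := fun st => min (2 * (st.2 : ℝ)) (1 - (st.1 : ℝ)) with hu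
  set r : I × I → ℝ := fun st => max 0 ((2 * (st.2 : ℝ) - (1 - (st.1 : ℝ))) / (1 + (st.1 : ℝ)))
    with hr
  have humem : ∀ st : I × I, u st ∈ I := by
    intro st
    constructor
    · exact le_min (by linarith [st.2.2.1]) (by linarith [st.1.2.2])
    · exact (min_le_right _ _).trans (by linarith [st.1.2.1])
  have hden : ∀ st : I × I, (0 : ℝ) < 1 + (st.1 : ℝ) := fun st => by linarith [st.1.2.1]
  have hr0 : ∀ st : I × I, 0 ≤ r st := fun st => le_max_left _ _
  have hr1 : ∀ st : I × I, r st ≤ 1 := by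
    intro st
    apply max_le (by norm_num)
    rw [div_le_one (hden st)]
    linarith [st.2.2.2]
  have hmem : ∀ st : I × I,
      (1 - r st) • ((γ.extend (u st)) : E) + r st • (q : E) ∈ ball p ε \ {p} := by
    intro st
    have hext : γ.extend (u st) = γ ⟨u st, humem st⟩ := Path.extend_apply γ (humem st)
    rw [hext]
    set c : E := (γ ⟨u st, humem st⟩ : E) with hc
    have hseg : (1 - r st) • c + r st • (q : E) ∈ segment ℝ (q : E) c := by
      refine ⟨r st, 1 - r st, hr0 st, by linarith [hr1 st], by ring, ?_⟩
      exact add_comm _ _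
    refine ⟨(convex_ball p ε).segment_subset q.2.1 (γ _).2.1 hseg, ?_⟩
    simp only [mem_singleton_iff]
    intro heq
    rw [heq] at hseg
    exact hq2 ⟨u st, humem st⟩ hseg
  have hcu : Continuous u := by
    apply Continuous.min
    · exact continuous_const.mul (continuous_subtype_val.comp continuous_snd)
    · exact continuous_const.sub (continuous_subtype_val.comp continuous_fst)
  have hcr : Continuous r := by
    apply Continuous.max continuous_const
    apply Continuous.div
    · fun_prop
    · fun_prop
    · exact fun st => (hden st).ne'
  have hcγ : Continuous fun st : I × I => ((γ.extend (u st)) : E) :=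
    continuous_subtype_val.comp (γ.continuous_extend.comp hcu)
  have F : Path.Homotopy (γ.trans σ') τ := by
    refine ⟨⟨⟨fun st => ⟨(1 - r st) • ((γ.extend (u st)) : E) + r st • (q : E), hmem st⟩,
      ?_⟩, ?_, ?_⟩, ?_⟩
    · apply Continuous.subtype_mk
      exact ((continuous_const.sub hcr).smul hcγ).add (hcr.smul continuous_const)
    · -- s = 0 : the path γ.trans σ'
      intro t
      apply Subtype.ext
      show (1 - r (0, t)) • ((γ.extend (u (0, t))) : E) + r (0, t) • (q : E)
        = (((γ.trans σ') t : ↥(ball p ε \ {p})) : E)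
      have hs0 : (((0 : I) : ℝ)) = 0 := rfl
      rw [Path.trans_apply]
      split_ifs with h
      · have hu0 : u (0, t) = 2 * (t : ℝ) := by
          simp only [hu, hs0]
          exact min_eq_left (by linarith)
        have hr0' : r (0, t) = 0 := by
          simp only [hr, hs0]
          apply max_eq_left
          apply div_nonpos_of_nonpos_of_nonneg <;> linarith
        rw [hu0, hr0']
        have : γ.extend (2 * (t : ℝ)) = γ ⟨2 * (t : ℝ), by constructor <;> linarith [t.2.1]⟩ :=
          Path.extend_apply γ (by constructor <;> linarith [t.2.1])
        rw [this]
        simp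
      · push_neg at h
        have hu0 : u (0, t) = 1 := by
          simp only [hu, hs0]
          rw [show (1:ℝ) - 0 = 1 by norm_num]
          exact min_eq_right (by linarith)
        have hr0' : r (0, t) = 2 * (t : ℝ) - 1 := by
          simp only [hr, hs0]
          rw [show (2 * (t : ℝ) - (1 - 0)) / (1 + 0) = 2 * (t : ℝ) - 1 by norm_num]
          exact max_eq_right (by linarith)
        rw [hu0, hr0', Path.extend_one]
        simp only [Path.target, hσ', segPath_apply]
    · -- s = 1 : the path τ
      intro t
      apply Subtype.ext
      show (1 - r (1, t)) • ((γ.extend (u (1, t))) : E) + r (1, t) • (q : E) = ((τ t) : E)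
      have hs1 : (((1 : I) : ℝ)) = 1 := rfl
      have hu1 : u (1, t) = 0 := by
        simp only [hu, hs1]
        rw [sub_self]
        exact min_eq_right (by linarith [t.2.1])
      have hr1' : r (1, t) = (t : ℝ) := by
        simp only [hr, hs1, sub_self, sub_zero]
        rw [show 2 * (t : ℝ) / (1 + 1) = (t : ℝ) by ring]
        exact max_eq_right t.2.1
      rw [hu1, hr1', Path.extend_zero]
      simp [hτ, Path.source]
    · -- fixed endpoints
      intro s t ht
      simp only [Set.mem_insert_iff, Set.mem_singleton_iff] at ht
      rcases ht with rfl | rfl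
      · apply Subtype.ext
        show (1 - r (s, 0)) • ((γ.extend (u (s, 0))) : E) + r (s, 0) • (q : E)
          = (((γ.trans σ') 0 : ↥(ball p ε \ {p})) : E)
        have ht0 : (((0 : I) : ℝ)) = 0 := rfl
        have hu0 : u (s, 0) = 0 := by
          simp only [hu, ht0, mul_zero]
          exact min_eq_left (by linarith [s.2.2])
        have hr0' : r (s, 0) = 0 := by
          simp only [hr, ht0, mul_zero]
          apply max_eq_left
          apply div_nonpos_of_nonpos_of_nonneg
          · linarith [s.2.2]
          · linarith [s.2.1]
        rw [hu0, hr0', Path.extend_zero]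
        simp [Path.source]
      · apply Subtype.ext
        show (1 - r (s, 1)) • ((γ.extend (u (s, 1))) : E) + r (s, 1) • (q : E)
          = (((γ.trans σ') 1 : ↥(ball p ε \ {p})) : E)
        have ht1 : (((1 : I) : ℝ)) = 1 := rfl
        have hu1 : u (s, 1) = 1 - (s : ℝ) := by
          simp only [hu, ht1, mul_one]
          exact min_eq_right (by linarith [s.2.1])
        have hr1' : r (s, 1) = 1 := by
          simp only [hr, ht1, mul_one]
          rw [show (2 - (1 - (s : ℝ))) / (1 + (s : ℝ)) = 1 by
            rw [div_eq_one_iff_eq (hden (s, 1)).ne']; push_cast; ring]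
          exact max_eq_right (by norm_num)
        rw [hu1, hr1']
        simp [Path.target]
  have hstep : (γ.trans σ').Homotopic τ := ⟨F⟩
  have a1 : γ.Homotopic (γ.trans (Path.refl y)) := ⟨(Path.Homotopy.transRefl γ).symm⟩
  have a2 : (γ.trans (Path.refl y)).Homotopic (γ.trans (σ'.trans σ'.symm)) :=
    Path.Homotopic.hcomp (Path.Homotopic.refl γ) ⟨Path.Homotopy.reflTransSymm σ'⟩
  have a3 : (γ.trans (σ'.trans σ'.symm)).Homotopic ((γ.trans σ').trans σ'.symm) :=
    ⟨(Path.Homotopy.transAssoc γ σ' σ'.symm).symm⟩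
  have a4 : ((γ.trans σ').trans σ'.symm).Homotopic (τ.trans σ'.symm) :=
    Path.Homotopic.hcomp hstep (Path.Homotopic.refl _)
  exact ((a1.trans a2).trans a3).trans a4

section Euclidean

open MeasureTheory

variable {n : ℕ}

local notation "En" => EuclideanSpace ℝ (Fin n)

lemma good_q (hn : 3 ≤ n) (p : En) {ε : ℝ} (hε : 0 < ε) (L : List (En × En)) :
    ∃ q ∈ ball p ε, ∀ pr ∈ L, q ∉ affineSpan ℝ ({p, pr.1, pr.2} : Set En) := by
  have hprop : ∀ pr : En × En, affineSpan ℝ ({p, pr.1, pr.2} : Set En) ≠ ⊤ := by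
    intro pr htop
    have h2 := (coplanar_triple ℝ p pr.1 pr.2).finrank_le_two
    rw [← direction_affineSpan, htop, AffineSubspace.direction_top, finrank_top,
      finrank_euclideanSpace, Fintype.card_fin] at h2
    omega
  by_contra hcon
  push_neg at hcon
  have hcover : ball p ε ⊆ ⋃ pr ∈ {pr | pr ∈ L},
      (affineSpan ℝ ({p, pr.1, pr.2} : Set En) : Set En) := by
    intro z hz
    obtain ⟨pr, hpr, hmem⟩ := hcon z hz
    exact mem_biUnion hpr hmem
  have h0 : volume (⋃ pr ∈ {pr | pr ∈ L},
      (affineSpan ℝ ({p, pr.1, pr.2} : Set En) : Set En)) = 0 := by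
    refine (measure_biUnion_null_iff L.finite_toSet.countable).2 ?_
    intro pr _
    exact Measure.addHaar_affineSubspace volume _ (hprop pr)
  have h1 := measure_ball_pos volume p hε
  have h2 := measure_mono (μ := (volume : Measure En)) hcover
  rw [h0] at h2
  exact absurd (le_antisymm h2 zero_le) h1.ne'

lemma punctured_pathConnected (hn : 3 ≤ n) {p : En} {ε : ℝ} (hε : 0 < ε) :
    IsPathConnected (ball p ε \ {p} : Set En) := by
  have hn0 : 0 < n := by omega
  set v : En := EuclideanSpace.single (⟨0, hn0⟩ : Fin n) (ε / 2) with hv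
  have hvnorm : ‖v‖ = ε / 2 := by
    rw [hv, EuclideanSpace.norm_single, Real.norm_eq_abs, abs_of_pos (by linarith)]
  have hx₀ : p + v ∈ ball p ε \ {p} := by
    constructor
    · rw [mem_ball, dist_eq_norm]
      simp only [add_sub_cancel_left, hvnorm]
      linarith
    · simp only [mem_singleton_iff]
      intro h
      have hv0 : v = 0 := by
        have := congrArg (fun w => w - p) h
        simpa [add_sub_cancel_left] using this
      rw [hv0, norm_zero] at hvnorm
      linarith
  refine ⟨p + v, hx₀, ?_⟩
  intro z hz
  obtain ⟨q, hq, hqL⟩ := good_q hn p hε [(p + v, p + v), (z, z)]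
  have key : ∀ w : En, w ∈ ball p ε \ {p} → (w, w) ∈ [(p + v, p + v), (z, z)] →
      JoinedIn (ball p ε \ {p}) w q := by
    intro w hw hmem
    apply JoinedIn.of_segment_subset
    intro c hc
    refine ⟨(convex_ball p ε).segment_subset hw.1 hq hc, ?_⟩
    simp only [mem_singleton_iff]
    rintro rfl
    rw [segment_symm] at hc
    refine hqL (w, w) hmem ?_
    refine mem_affineSpan_of_mem_segment ?_ ?_ ?_ hc
    · exact subset_affineSpan ℝ _ (mem_insert _ _)
    · exact subset_affineSpan ℝ _ (by simp)
    · exact fun h => hw.2 (by simp [h.symm])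
  exact (key _ hx₀ (by simp)).trans (key z hz (by simp)).symm

theorem punctured_simplyConnected (hn : 3 ≤ n) {p : En} {ε : ℝ} (hε : 0 < ε) :
    SimplyConnectedSpace ↥(ball p ε \ {p} : Set En) := by
  rw [simply_connected_iff_paths_homotopic']
  constructor
  · exact isPathConnected_iff_pathConnectedSpace.1 (punctured_pathConnected hn hε)
  intro x y γ₁ γ₂
  have key : ∀ γ : Path x y, ∃ γ' : Path x y, γ.Homotopic γ' ∧ ∃ L : List (En × En), L ≠ [] ∧
      ∀ t : I, ∃ pr ∈ L, ((γ' t) : En) ∈ segment ℝ pr.1 pr.2 := by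
    intro γ
    set f : I → En := fun t => (γ t : En) with hf
    have hfc : Continuous f := continuous_subtype_val.comp γ.continuous
    have hK : IsCompact (Set.range f) := isCompact_range hfc
    have hpK : p ∉ Set.range f := by
      rintro ⟨t, ht⟩
      exact (γ t).2.2 ht
    have hd : 0 < infDist p (Set.range f) :=
      (hK.isClosed.notMem_iff_infDist_pos (Set.range_nonempty f)).1 hpK
    obtain ⟨δ, hδ, hδ2⟩ := Metric.uniformContinuous_iff.1
      (CompactSpace.uniformContinuous_of_continuous hfc) (infDist p (Set.range f)) hd
    obtain ⟨k, hk⟩ := exists_pow_lt_of_lt_one hδ (by norm_num : (2⁻¹ : ℝ) < 1)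
    refine approx_polygonal k γ _ (fun t => infDist_le_dist_of_mem (mem_range_self t)) ?_
    intro t t' hle
    apply hδ2
    rw [Subtype.dist_eq, Real.dist_eq]
    exact lt_of_le_of_lt hle hk
  obtain ⟨γ₁', h₁, L₁, hL₁ne, hcov₁⟩ := key γ₁
  obtain ⟨γ₂', h₂, L₂, hL₂ne, hcov₂⟩ := key γ₂
  obtain ⟨q, hqball, hqL⟩ := good_q hn p hε (L₁ ++ L₂)
  have hqp : q ≠ p := by
    obtain ⟨pr, hpr, -⟩ := hcov₁ 0
    intro h
    exact hqL pr (List.mem_append_left _ hpr) (h ▸ subset_affineSpan ℝ _ (mem_insert _ _))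
  set Q : ↥(ball p ε \ {p}) := ⟨q, hqball, by simpa using hqp⟩ with hQ
  have hq2 : ∀ γ' : Path x y,
      (∀ t : I, ∃ pr ∈ L₁ ++ L₂, ((γ' t) : En) ∈ segment ℝ pr.1 pr.2) →
      ∀ t : I, p ∉ segment ℝ (Q : En) ((γ' t) : En) := by
    intro γ' hcov t hseg
    obtain ⟨pr, hpr, hc⟩ := hcov t
    refine hqL pr hpr ?_
    refine mem_affineSpan_of_mem_segment ?_ ?_ ?_ hseg
    · exact subset_affineSpan ℝ _ (mem_insert _ _)
    · exact segment_subset_affineSpan (subset_affineSpan ℝ _ (by simp))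
        (subset_affineSpan ℝ _ (by simp)) hc
    · exact fun h => (γ' t).2.2 (by simp [h.symm])
  have hq2₁ : ∀ t : I, p ∉ segment ℝ (Q : En) ((γ₁' t) : En) := by
    refine hq2 γ₁' fun t => ?_
    obtain ⟨pr, h, hm⟩ := hcov₁ t
    exact ⟨pr, List.mem_append_left _ h, hm⟩
  have hq2₂ : ∀ t : I, p ∉ segment ℝ (Q : En) ((γ₂' t) : En) := by
    refine hq2 γ₂' fun t => ?_
    obtain ⟨pr, h, hm⟩ := hcov₂ t
    exact ⟨pr, List.mem_append_right _ h, hm⟩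
  have hseg_mem : ∀ (w : ↥(ball p ε \ {p})), (p ∉ segment ℝ (Q : En) (w : En)) →
      ∀ t : I, (1 - (t : ℝ)) • (w : En) + (t : ℝ) • (Q : En) ∈ ball p ε \ {p} := by
    intro w hw t
    have hs : (1 - (t : ℝ)) • (w : En) + (t : ℝ) • (Q : En)
        ∈ segment ℝ (Q : En) (w : En) :=
      ⟨(t : ℝ), 1 - (t : ℝ), t.2.1, by linarith [t.2.2], by ring, add_comm _ _⟩
    refine ⟨(convex_ball p ε).segment_subset Q.2.1 w.2.1 hs, ?_⟩
    simp only [mem_singleton_iff]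
    intro h
    rw [h] at hs
    exact hw hs
  have h1 : ∀ t : I, (1 - (t : ℝ)) • (x : En) + (t : ℝ) • (Q : En) ∈ ball p ε \ {p} := by
    apply hseg_mem
    have := hq2₁ 0
    rwa [Path.source] at this
  have h2 : ∀ t : I, (1 - (t : ℝ)) • (y : En) + (t : ℝ) • (Q : En) ∈ ball p ε \ {p} := by
    apply hseg_mem
    have := hq2₁ 1
    rwa [Path.target] at this
  have c₁ := cone_homotopic γ₁' hq2₁ h1 h2
  have c₂ := cone_homotopic γ₂' hq2₂ h1 h2
  exact (h₁.trans (c₁.trans c₂.symm)).trans h₂.symm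

end Euclidean

end

theorem isolated_point_scnp
    {n : ℕ} (hn : 3 ≤ n) {M : Type*} [TopologicalSpace M]
    {φ : M → EuclideanSpace ℝ (Fin n)}
    (hφ : Topology.IsEmbedding φ) (hφo : IsOpen (range φ))
    {p : EuclideanSpace ℝ (Fin n)} (hp : p ∈ frontier (range φ))
    (hiso : ∃ U : Set (EuclideanSpace ℝ (Fin n)), IsOpen U ∧
      U ∩ frontier (range φ) = {p}) :
    ∀ U : Set (EuclideanSpace ℝ (Fin n)), IsOpen U → p ∈ U →
      ∃ V : Set (EuclideanSpace ℝ (Fin n)), IsOpen V ∧ p ∈ V ∧ V ⊆ U ∧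
        SimplyConnectedSpace ↥(V ∩ range φ) := by
  intro U hU hpU
  obtain ⟨U₀, hU₀o, hU₀⟩ := hiso
  have hpU₀ : p ∈ U₀ := by
    have h : p ∈ U₀ ∩ frontier (range φ) := by rw [hU₀]; exact mem_singleton p
    exact h.1
  obtain ⟨ε, hε, hball⟩ := Metric.isOpen_iff.1 (hU.inter hU₀o) p ⟨hpU, hpU₀⟩
  have hpnr : p ∉ range φ := by
    intro h
    have h2 : p ∈ interior (range φ) := by rwa [hφo.interior_eq]
    exact hp.2 h2
  have hfront : ∀ a ∈ ball p ε, a ∈ frontier (range φ) → a = p := by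
    intro a ha haf
    have : a ∈ U₀ ∩ frontier (range φ) := ⟨(hball ha).2, haf⟩
    rw [hU₀] at this
    exact this
  have hsub : ball p ε \ {p} ⊆ range φ := by
    by_contra hns
    obtain ⟨w, hw, hwn⟩ := not_subset.1 hns
    have hwB : w ∈ (closure (range φ))ᶜ := by
      intro hwc
      have hwf : w ∈ frontier (range φ) :=
        ⟨hwc, by rwa [hφo.interior_eq]⟩
      exact hw.2 (hfront w hw.1 hwf)
    have hpc : IsPreconnected (ball p ε \ {p}) :=
      (punctured_pathConnected hn hε).isConnected.isPreconnected
    obtain ⟨z, hz1, hz2⟩ := _root_.mem_closure_iff.1 hp.1 (ball p ε) isOpen_ball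
      (mem_ball_self hε)
    have hzne : z ≠ p := fun h => hpnr (h ▸ hz2)
    have hcover : ball p ε \ {p} ⊆ range φ ∪ (closure (range φ))ᶜ := by
      intro a ha
      by_cases har : a ∈ range φ
      · exact Or.inl har
      · refine Or.inr fun hacl => ?_
        have haf : a ∈ frontier (range φ) :=
          ⟨hacl, by rwa [hφo.interior_eq]⟩
        exact ha.2 (hfront a ha.1 haf)
    obtain ⟨v, -, hvA, hvB⟩ := hpc (range φ) (closure (range φ))ᶜ hφo
      isClosed_closure.isOpen_compl hcover
      ⟨z, ⟨hz1, hzne⟩, hz2⟩ ⟨w, hw, hwB⟩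
    exact hvB (subset_closure hvA)
  refine ⟨ball p ε, isOpen_ball, mem_ball_self hε, fun z hz => (hball hz).1, ?_⟩
  have heq : ball p ε ∩ range φ = ball p ε \ {p} := by
    apply Subset.antisymm
    · rintro z ⟨hz1, hz2⟩
      exact ⟨hz1, fun h => hpnr (mem_singleton_iff.1 h ▸ hz2)⟩
    · intro z hz
      exact ⟨hz.1, hsub hz⟩
  rw [heq]
  exact punctured_simplyConnected hn hε
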